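/- Let τ(ω) = cos²(ω₁/2) e^{-iω₁} cos²(ω₂/2) e^{-iω₂} cos((ω₁+ω₂)/2) e^{-i(ω₁+ω₂)/2} (the lowpass mask of the bivariate box spline with direction matrix [I I e], up to phase), and S(ω)^{-1} = (1/54)(2+cos ω₁)(2+cos ω₂)(5+cos(ω₁+ω₂)). Then for all ω ∈ ℝ², 1/S(2ω) − Σ_{γ∈{0,π}²} |τ(ω+γ)|²/S(ω+γ) ≥ 0, i.e., the oblique sub-QMF condition holds for dyadic dilation. -/

import Mathlib

set_option maxHeartbeats 1000000

lemma expabs (u : ℝ) : ‖Complex.exp (-Complex.I * (u : ℂ))‖ = 1 := by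
  rw [Complex.norm_exp]; simp

lemma tau_abs_sq (u v : ℝ) :
  ‖((Real.cos (u / 2) : ℝ) : ℂ) ^ 2 * Complex.exp (-Complex.I * (u : ℂ))
        * ((Real.cos (v / 2) : ℝ) : ℂ) ^ 2 * Complex.exp (-Complex.I * (v : ℂ))
        * ((Real.cos ((u + v) / 2) : ℝ) : ℂ)
        * Complex.exp (-Complex.I * (((u + v) / 2 : ℝ) : ℂ))‖ ^ 2
  = ((Real.cos (u/2))^2)^2 * ((Real.cos (v/2))^2)^2 * (Real.cos ((u+v)/2))^2 := by
  simp only [norm_mul, norm_pow, Complex.norm_real, Real.norm_eq_abs, expabs, mul_one, one_mul]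
  rw [mul_pow, mul_pow, sq_abs, sq_abs, sq_abs]

lemma key (a b p : ℝ) (ha : -1 ≤ a) (ha' : a ≤ 1) (hb : -1 ≤ b) (hb' : b ≤ 1) :
    0 ≤ (1/54)*(2+(2*a^2-1))*(2+(2*b^2-1))*(5+(2*p^2-1))
      - ( ((1+a)/2)^2*((1+b)/2)^2*((1+p)/2)*((1/54)*(2+a)*(2+b)*(5+p))
        + ((1+a)/2)^2*((1-b)/2)^2*((1-p)/2)*((1/54)*(2+a)*(2-b)*(5-p))
        + ((1-a)/2)^2*((1+b)/2)^2*((1-p)/2)*((1/54)*(2-a)*(2+b)*(5-p))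
        + ((1-a)/2)^2*((1-b)/2)^2*((1+p)/2)*((1/54)*(2-a)*(2-b)*(5+p)) ) := by
  have e : (1/54)*(2+(2*a^2-1))*(2+(2*b^2-1))*(5+(2*p^2-1))
      - ( ((1+a)/2)^2*((1+b)/2)^2*((1+p)/2)*((1/54)*(2+a)*(2+b)*(5+p))
        + ((1+a)/2)^2*((1-b)/2)^2*((1-p)/2)*((1/54)*(2+a)*(2-b)*(5-p))
        + ((1-a)/2)^2*((1+b)/2)^2*((1-p)/2)*((1/54)*(2-a)*(2+b)*(5-p))
        + ((1-a)/2)^2*((1-b)/2)^2*((1+p)/2)*((1/54)*(2-a)*(2-b)*(5+p)) )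
      = ((1+a)/2)^2*((2+a)/3)*(((1+b)/2)^2*((2+b)/3)*((1-p)/2)^2)
      + ((1-a)/2)^2*((2-a)/3)*(((1+b)/2)^2*((2+b)/3)*((1+p)/2)^2)
      + ((1+a)/2)^2*((2+a)/3)*(((1-b)/2)^2*((2-b)/3)*((1+p)/2)^2)
      + ((1-a)/2)^2*((2-a)/3)*(((1-b)/2)^2*((2-b)/3)*((1-p)/2)^2) := by ring
  rw [e]
  have h1 : (0:ℝ) ≤ (2+a)/3 := by linarith
  have h2 : (0:ℝ) ≤ (2-a)/3 := by linarith
  have h3 : (0:ℝ) ≤ (2+b)/3 := by linarith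
  have h4 : (0:ℝ) ≤ (2-b)/3 := by linarith
  have t1 := mul_nonneg (mul_nonneg (sq_nonneg ((1+a)/2)) h1)
    (mul_nonneg (mul_nonneg (sq_nonneg ((1+b)/2)) h3) (sq_nonneg ((1-p)/2)))
  have t2 := mul_nonneg (mul_nonneg (sq_nonneg ((1-a)/2)) h2)
    (mul_nonneg (mul_nonneg (sq_nonneg ((1+b)/2)) h3) (sq_nonneg ((1+p)/2)))
  have t3 := mul_nonneg (mul_nonneg (sq_nonneg ((1+a)/2)) h1)
    (mul_nonneg (mul_nonneg (sq_nonneg ((1-b)/2)) h4) (sq_nonneg ((1+p)/2)))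
  have t4 := mul_nonneg (mul_nonneg (sq_nonneg ((1-a)/2)) h2)
    (mul_nonneg (mul_nonneg (sq_nonneg ((1-b)/2)) h4) (sq_nonneg ((1-p)/2)))
  linarith

/-- The oblique sub-QMF condition holds for dyadic dilation in two dimensions for
the lowpass mask `τ` of the box spline with direction matrix `[I I e]` and the
vanishing moment recovery function `S` with
`1/S(ω) = (1/54)(2+cos ω₁)(2+cos ω₂)(5+cos(ω₁+ω₂))`. -/
theorem boxspline_oblique_subQMF
    (τ : ℝ → ℝ → ℂ)
    (hτ : ∀ x y : ℝ, τ x y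
      = ((Real.cos (x / 2) : ℝ) : ℂ) ^ 2 * Complex.exp (-Complex.I * (x : ℂ))
        * ((Real.cos (y / 2) : ℝ) : ℂ) ^ 2 * Complex.exp (-Complex.I * (y : ℂ))
        * ((Real.cos ((x + y) / 2) : ℝ) : ℂ)
        * Complex.exp (-Complex.I * (((x + y) / 2 : ℝ) : ℂ)))
    (invS : ℝ → ℝ → ℝ)
    (hinvS : ∀ x y : ℝ, invS x y
      = (1 / 54) * (2 + Real.cos x) * (2 + Real.cos y) * (5 + Real.cos (x + y))) :
    ∀ ω₁ ω₂ : ℝ,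
      0 ≤ invS (2 * ω₁) (2 * ω₂)
          - ∑ γ₁ ∈ ({0, Real.pi} : Finset ℝ), ∑ γ₂ ∈ ({0, Real.pi} : Finset ℝ),
              ‖τ (ω₁ + γ₁) (ω₂ + γ₂)‖ ^ 2 * invS (ω₁ + γ₁) (ω₂ + γ₂) := by
  intro x y
  have hne : (0:ℝ) ≠ Real.pi := Ne.symm Real.pi_ne_zero
  simp only [Finset.sum_pair hne, hτ, hinvS, tau_abs_sq, add_zero]
  have hu0 : Real.cos (x/2)^2 = 1/2 + Real.cos x / 2 := by
    rw [Real.cos_sq, show 2*(x/2) = x by ring]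
  have hu1 : Real.cos ((x+Real.pi)/2)^2 = 1/2 - Real.cos x / 2 := by
    rw [Real.cos_sq, show 2*((x+Real.pi)/2) = x + Real.pi by ring, Real.cos_add_pi]; ring
  have hv0 : Real.cos (y/2)^2 = 1/2 + Real.cos y / 2 := by
    rw [Real.cos_sq, show 2*(y/2) = y by ring]
  have hv1 : Real.cos ((y+Real.pi)/2)^2 = 1/2 - Real.cos y / 2 := by
    rw [Real.cos_sq, show 2*((y+Real.pi)/2) = y + Real.pi by ring, Real.cos_add_pi]; ring
  have hw00 : Real.cos ((x+y)/2)^2 = 1/2 + Real.cos (x+y) / 2 := by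
    rw [Real.cos_sq, show 2*((x+y)/2) = x+y by ring]
  have hw01 : Real.cos ((x+(y+Real.pi))/2)^2 = 1/2 - Real.cos (x+y) / 2 := by
    rw [Real.cos_sq, show 2*((x+(y+Real.pi))/2) = (x+y) + Real.pi by ring,
      Real.cos_add_pi]; ring
  have hw10 : Real.cos ((x+Real.pi+y)/2)^2 = 1/2 - Real.cos (x+y) / 2 := by
    rw [Real.cos_sq, show 2*((x+Real.pi+y)/2) = (x+y) + Real.pi by ring,
      Real.cos_add_pi]; ring
  have hw11 : Real.cos ((x+Real.pi+(y+Real.pi))/2)^2 = 1/2 + Real.cos (x+y) / 2 := by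
    rw [Real.cos_sq, show 2*((x+Real.pi+(y+Real.pi))/2) = (x+y) + 2*Real.pi by ring,
      Real.cos_add_two_pi]
  have hc1 : Real.cos (x+Real.pi) = -Real.cos x := Real.cos_add_pi x
  have hc2 : Real.cos (y+Real.pi) = -Real.cos y := Real.cos_add_pi y
  have hs01 : Real.cos (x+(y+Real.pi)) = -Real.cos (x+y) := by
    rw [show x+(y+Real.pi) = (x+y)+Real.pi by ring, Real.cos_add_pi]
  have hs10 : Real.cos (x+Real.pi+y) = -Real.cos (x+y) := by
    rw [show x+Real.pi+y = (x+y)+Real.pi by ring, Real.cos_add_pi]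
  have hs11 : Real.cos (x+Real.pi+(y+Real.pi)) = Real.cos (x+y) := by
    rw [show x+Real.pi+(y+Real.pi) = (x+y)+2*Real.pi by ring, Real.cos_add_two_pi]
  have h2x : Real.cos (2*x) = 2*Real.cos x^2 - 1 := Real.cos_two_mul x
  have h2y : Real.cos (2*y) = 2*Real.cos y^2 - 1 := Real.cos_two_mul y
  have h2xy : Real.cos (2*x+2*y) = 2*Real.cos (x+y)^2 - 1 := by
    rw [show 2*x+2*y = 2*(x+y) by ring, Real.cos_two_mul]
  rw [hu0, hu1, hv0, hv1, hw00, hw01, hw10, hw11, hc1, hc2, hs01, hs10, hs11,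
    h2x, h2y, h2xy]
  have hk := key (Real.cos x) (Real.cos y) (Real.cos (x+y))
    (Real.neg_one_le_cos x) (Real.cos_le_one x)
    (Real.neg_one_le_cos y) (Real.cos_le_one y)
  linarith [hk]
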